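/- Let A be a finite-dimensional ℤ/2ℤ-graded associative algebra over a field of characteristic zero with an odd invariant scalar product g, and let (e_μ), (e^μ) be homogeneous dual bases with g(e^μ, e_ν) = δ^μ_ν. Then for all homogeneous a, b ∈ A: Σ_μ (−1)^{|e^μ|(|a|+|b|+1)} e^μ·a·b·e_μ = (−1)^{|a||b|} Σ_μ (−1)^{|e^μ|(|a|+|b|+1)} e^μ·b·a·e_μ. -/

import Mathlib

/-- A finite-dimensional ℤ/2ℤ-graded associative algebra `A = A₀ ⊕ A₁` (possibly
non-unital) with an odd invariant scalar product `g`: `g` is non-degenerate, vanishes on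
`A₀ × A₀` and `A₁ × A₁`, is invariant (`g(ab,c) = g(a,bc)`) and supersymmetric (which,
given the vanishing on equal parities, amounts to plain symmetry). -/
structure OddFrob (k A : Type*) [Field k] [NonUnitalRing A] [Module k A]
    [SMulCommClass k A A] [IsScalarTower k A A] where
  A0 : Submodule k A
  A1 : Submodule k A
  compl : IsCompl A0 A1
  mul00 : ∀ x ∈ A0, ∀ y ∈ A0, x * y ∈ A0
  mul01 : ∀ x ∈ A0, ∀ y ∈ A1, x * y ∈ A1
  mul10 : ∀ x ∈ A1, ∀ y ∈ A0, x * y ∈ A1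
  mul11 : ∀ x ∈ A1, ∀ y ∈ A1, x * y ∈ A0
  g : A →ₗ[k] A →ₗ[k] k
  nondeg : ∀ x, (∀ y, g x y = 0) → x = 0
  zero00 : ∀ x ∈ A0, ∀ y ∈ A0, g x y = 0
  zero11 : ∀ x ∈ A1, ∀ y ∈ A1, g x y = 0
  invar : ∀ x y z, g (x * y) z = g x (y * z)
  symm : ∀ x y, g x y = g y x

variable {k A : Type*} [Field k] [NonUnitalRing A] [Module k A]
  [SMulCommClass k A A] [IsScalarTower k A A]

/-- `a` is homogeneous of parity `p` (mod 2). -/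
def OddFrob.Homog (S : OddFrob k A) (p : ℕ) (a : A) : Prop :=
  if p % 2 = 0 then a ∈ S.A0 else a ∈ S.A1

/-- Homogeneous dual bases `(e_μ)`, `(e^μ)` of `A`: `e^μ = f μ` is homogeneous of parity
`q μ`, `e_μ = e μ` of the opposite parity, and `g(e^μ, e_ν) = δ^μ_ν`. -/
def OddFrob.DualBases (S : OddFrob k A) {ι : Type*} [Fintype ι] [DecidableEq ι]
    (e : Module.Basis ι k A) (f : ι → A) (q : ι → ℕ) : Prop :=
  (∀ μ, S.Homog (q μ) (f μ)) ∧ (∀ μ, S.Homog (q μ + 1) (e μ)) ∧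
  (∀ μ ν, S.g (f μ) (e ν) = if μ = ν then 1 else 0)

namespace OddFrobAux

lemma neg_one_pow_congr {m n : ℕ} (h : m % 2 = n % 2) : (-1 : k) ^ m = (-1 : k) ^ n := by
  rcases Nat.even_or_odd m with hm | hm
  · have hn : Even n := Nat.even_iff.2 (by rw [← h]; exact Nat.even_iff.1 hm)
    rw [hm.neg_one_pow, hn.neg_one_pow]
  · have hn : Odd n := Nat.odd_iff.2 (by rw [← h]; exact Nat.odd_iff.1 hm)
    rw [hm.neg_one_pow, hn.neg_one_pow]

/-- The sign operator: `(-1)^c` on `A0`, identity on `A1`. -/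
noncomputable def sigma (S : OddFrob k A) (c : ℕ) : A →ₗ[k] A :=
  ((-1 : k) ^ c) • (S.A0.subtype ∘ₗ S.A0.linearProjOfIsCompl S.A1 S.compl)
    + S.A1.subtype ∘ₗ S.A1.linearProjOfIsCompl S.A0 S.compl.symm

lemma sigma_apply0 (S : OddFrob k A) (c : ℕ) {x : A} (hx : x ∈ S.A0) :
    sigma S c x = ((-1 : k) ^ c) • x := by
  have h1 : S.A0.linearProjOfIsCompl S.A1 S.compl x = ⟨x, hx⟩ :=
    Submodule.linearProjOfIsCompl_apply_left S.compl ⟨x, hx⟩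
  have h2 : S.A1.linearProjOfIsCompl S.A0 S.compl.symm x = 0 :=
    Submodule.projectionOnto_apply_of_mem_right S.compl.symm hx
  simp [sigma, h1, h2]

lemma sigma_apply1 (S : OddFrob k A) (c : ℕ) {x : A} (hx : x ∈ S.A1) :
    sigma S c x = x := by
  have h1 : S.A0.linearProjOfIsCompl S.A1 S.compl x = 0 :=
    Submodule.projectionOnto_apply_of_mem_right S.compl hx
  have h2 : S.A1.linearProjOfIsCompl S.A0 S.compl.symm x = ⟨x, hx⟩ :=
    Submodule.linearProjOfIsCompl_apply_left S.compl.symm ⟨x, hx⟩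
  simp [sigma, h1, h2]

lemma sigma_homog (S : OddFrob k A) (c : ℕ) {x : A} {p : ℕ} (hx : S.Homog (p + 1) x) :
    sigma S c x = ((-1 : k) ^ (p * c)) • x := by
  unfold OddFrob.Homog at hx
  rcases Nat.even_or_odd p with hp | hp
  · have h2 : (p + 1) % 2 ≠ 0 := by have := Nat.even_iff.1 hp; omega
    rw [if_neg h2] at hx
    rw [sigma_apply1 S c hx]
    have : Even (p * c) := hp.mul_right c
    rw [this.neg_one_pow, one_smul]
  · have h2 : (p + 1) % 2 = 0 := by have := Nat.odd_iff.1 hp; omega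
    rw [if_pos h2] at hx
    rw [sigma_apply0 S c hx]
    congr 1
    refine neg_one_pow_congr ?_
    have : (p * c) % 2 = c % 2 := by
      rcases Nat.even_or_odd c with hc | hc
      · have h3 : Even (p * c) := hc.mul_left p
        have := Nat.even_iff.1 h3; have := Nat.even_iff.1 hc; omega
      · have h3 : Odd (p * c) := hp.mul hc
        have := Nat.odd_iff.1 h3; have := Nat.odd_iff.1 hc; omega
    omega

lemma sigma_mulLeft (S : OddFrob k A) (c pa : ℕ) {a : A} (ha : S.Homog pa a) (x : A) :
    sigma S c (a * x) = ((-1 : k) ^ (pa * c)) • (a * sigma S c x) := by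
  unfold OddFrob.Homog at ha
  obtain ⟨x0, x1, hx0, hx1, rfl⟩ := Submodule.codisjoint_iff_exists_add_eq.mp S.compl.codisjoint x
  rw [mul_add, map_add, map_add, mul_add, smul_add]
  rcases Nat.even_or_odd pa with hpa | hpa
  · rw [if_pos (Nat.even_iff.1 hpa)] at ha
    have hsgn : ((-1 : k) ^ (pa * c)) = 1 := (hpa.mul_right c).neg_one_pow
    rw [hsgn, one_smul, one_smul]
    congr 1
    · rw [sigma_apply0 S c hx0, sigma_apply0 S c (S.mul00 a ha x0 hx0), mul_smul_comm]
    · rw [sigma_apply1 S c hx1, sigma_apply1 S c (S.mul01 a ha x1 hx1)]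
  · rw [if_neg (by have := Nat.odd_iff.1 hpa; omega)] at ha
    have hsgn : ((-1 : k) ^ (pa * c)) = (-1 : k) ^ c := by
      refine neg_one_pow_congr ?_
      rcases Nat.even_or_odd c with hc | hc
      · have h3 := Nat.even_iff.1 ((hc.mul_left pa)); have := Nat.even_iff.1 hc; omega
      · have h3 := Nat.odd_iff.1 (hpa.mul hc); have := Nat.odd_iff.1 hc; omega
    rw [hsgn]
    congr 1
    · rw [sigma_apply0 S c hx0, sigma_apply1 S c (S.mul10 a ha x0 hx0), mul_smul_comm,
        smul_smul, ← pow_add]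
      have : ((-1 : k) ^ (c + c)) = 1 := (by exact ⟨c, rfl⟩ : Even (c + c)).neg_one_pow
      rw [this, one_smul]
    · rw [sigma_apply1 S c hx1, sigma_apply0 S c (S.mul11 a ha x1 hx1)]

lemma repr_eq {ι : Type*} [Fintype ι] [DecidableEq ι]
    (S : OddFrob k A) (e : Module.Basis ι k A) (f : ι → A)
    (hfe : ∀ μ ν, S.g (f μ) (e ν) = if μ = ν then 1 else 0) (x : A) (μ : ι) :
    e.repr x μ = S.g (f μ) x := by
  conv_rhs => rw [← Module.Basis.sum_repr e x]
  rw [map_sum]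
  simp [hfe, mul_ite]

lemma trace_eq {ι : Type*} [Fintype ι] [DecidableEq ι]
    (S : OddFrob k A) (e : Module.Basis ι k A) (f : ι → A)
    (hfe : ∀ μ ν, S.g (f μ) (e ν) = if μ = ν then 1 else 0) (F : A →ₗ[k] A) :
    LinearMap.trace k A F = ∑ μ, S.g (f μ) (F (e μ)) := by
  rw [LinearMap.trace_eq_matrix_trace k e F, Matrix.trace]
  refine Finset.sum_congr rfl fun μ _ => ?_
  rw [Matrix.diag_apply, LinearMap.toMatrix_apply, repr_eq S e f hfe]

lemma pairing {ι : Type*} [Fintype ι] [DecidableEq ι]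
    (S : OddFrob k A) (e : Module.Basis ι k A) (f : ι → A) (q : ι → ℕ)
    (he : ∀ μ, S.Homog (q μ + 1) (e μ))
    (hfe : ∀ μ ν, S.g (f μ) (e ν) = if μ = ν then 1 else 0)
    (c : ℕ) (u v y : A) :
    ∑ μ, (-1 : k) ^ (q μ * c) * (S.g (f μ * u * v * e μ)) y
      = LinearMap.trace k A
          (LinearMap.mulLeft k u * LinearMap.mulLeft k v * LinearMap.mulRight k y
            * sigma S c) := by
  rw [trace_eq S e f hfe]
  refine Finset.sum_congr rfl fun μ _ => ?_
  rw [S.invar, S.invar, S.invar]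
  rw [Module.End.mul_apply, Module.End.mul_apply, Module.End.mul_apply,
    sigma_homog S c (he μ)]
  simp [smul_eq_mul]

end OddFrobAux

/-- For homogeneous dual bases and homogeneous `a, b`:
`Σ_μ (−1)^{|e^μ|(|a|+|b|+1)} e^μ·a·b·e_μ = (−1)^{|a||b|} Σ_μ (−1)^{|e^μ|(|a|+|b|+1)} e^μ·b·a·e_μ`. -/
theorem dual_bases_swap_identity
    {k A : Type*} [Field k] [CharZero k] [NonUnitalRing A] [Module k A]
    [SMulCommClass k A A] [IsScalarTower k A A] [FiniteDimensional k A]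
    (S : OddFrob k A) {ι : Type*} [Fintype ι] [DecidableEq ι]
    (e : Module.Basis ι k A) (f : ι → A) (q : ι → ℕ) (hdb : S.DualBases e f q)
    (pa pb : ℕ) (a b : A) (ha : S.Homog pa a) (hb : S.Homog pb b) :
    ∑ μ, (-1 : k) ^ (q μ * (pa + pb + 1)) • (f μ * a * b * e μ) =
      (-1 : k) ^ (pa * pb) •
        ∑ μ, (-1 : k) ^ (q μ * (pa + pb + 1)) • (f μ * b * a * e μ) := by
  classical
  obtain ⟨hf, he, hfe⟩ := hdb
  set c : ℕ := pa + pb + 1 with hc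
  rw [← sub_eq_zero]
  refine S.nondeg _ fun y => ?_
  rw [map_sub, LinearMap.sub_apply, map_smul, LinearMap.smul_apply, smul_eq_mul]
  have expand : ∀ u v : A,
      (S.g (∑ μ, (-1 : k) ^ (q μ * c) • (f μ * u * v * e μ))) y
        = LinearMap.trace k A
            (LinearMap.mulLeft k u * LinearMap.mulLeft k v * LinearMap.mulRight k y
              * OddFrobAux.sigma S c) := by
    intro u v
    rw [map_sum, LinearMap.sum_apply, ← OddFrobAux.pairing S e f q he hfe c u v y]
    refine Finset.sum_congr rfl fun μ _ => ?_
    rw [map_smul, LinearMap.smul_apply, smul_eq_mul]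
  rw [expand a b, expand b a]
  -- trace cyclicity plus the sign commutation of `sigma` with left multiplication
  have hcomm : OddFrobAux.sigma S c * LinearMap.mulLeft k a
      = ((-1 : k) ^ (pa * c)) • (LinearMap.mulLeft k a * OddFrobAux.sigma S c) := by
    ext x
    simp only [Module.End.mul_apply, LinearMap.mulLeft_apply, LinearMap.smul_apply]
    exact OddFrobAux.sigma_mulLeft S c pa ha x
  have hRL : LinearMap.mulRight k y * LinearMap.mulLeft k a
      = LinearMap.mulLeft k a * LinearMap.mulRight k y :=
    (LinearMap.commute_mulLeft_right a y).symm.eq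
  have key : LinearMap.trace k A
        (LinearMap.mulLeft k a * LinearMap.mulLeft k b * LinearMap.mulRight k y
          * OddFrobAux.sigma S c)
      = ((-1 : k) ^ (pa * pb)) * LinearMap.trace k A
        (LinearMap.mulLeft k b * LinearMap.mulLeft k a * LinearMap.mulRight k y
          * OddFrobAux.sigma S c) := by
    have h1 : LinearMap.mulLeft k a * LinearMap.mulLeft k b * LinearMap.mulRight k y
          * OddFrobAux.sigma S c
        = LinearMap.mulLeft k a *
            (LinearMap.mulLeft k b * LinearMap.mulRight k y * OddFrobAux.sigma S c) := by
      simp only [mul_assoc]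
    rw [h1, LinearMap.trace_mul_comm]
    have h2 : LinearMap.mulLeft k b * LinearMap.mulRight k y * OddFrobAux.sigma S c
          * LinearMap.mulLeft k a
        = ((-1 : k) ^ (pa * c)) •
            (LinearMap.mulLeft k b * LinearMap.mulLeft k a * LinearMap.mulRight k y
              * OddFrobAux.sigma S c) := by
      rw [mul_assoc, hcomm, mul_smul_comm]
      congr 1
      calc LinearMap.mulLeft k b * LinearMap.mulRight k y *
            (LinearMap.mulLeft k a * OddFrobAux.sigma S c)
          = LinearMap.mulLeft k b * (LinearMap.mulRight k y * LinearMap.mulLeft k a)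
              * OddFrobAux.sigma S c := by simp only [mul_assoc]
        _ = _ := by rw [hRL]; simp only [mul_assoc]
    rw [h2, map_smul, smul_eq_mul]
    congr 1
    refine OddFrobAux.neg_one_pow_congr ?_
    have hsplit : pa * c = pa * pb + pa * (pa + 1) := by rw [hc]; ring
    have heven := Nat.even_iff.1 (Nat.even_mul_succ_self pa)
    omega
  rw [key]
  ring
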